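/- (Dependent function extensionality) Let C be a locally cartesian closed category and p : E → X a morphism. Let π : (Π_X p) × X → X be the projection and ε : (Π_X p) × X → E the counit of (−) × X ⊣ Π_X at p. Form the pullback Q' of Δp : E → E ×_X E along the map (ε₁, ε₂) : (Π_X p) × (Π_X p) × X → E ×_X E induced by the counit on each factor, giving an object q' over (Π_X p) × (Π_X p) × X. Let pr be the projection to (Π_X p) × (Π_X p). Then Δ(Π_X p) ≅ Π_pr(q') canonically in C/((Π_X p) × (Π_X p)). -/

import Mathlib

open CategoryTheory CategoryTheory.Limits MonoidalCategory CartesianMonoidalCategory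

universe v u

/-- The functor `(−) × X : C ⥤ C/X`, left adjoint to the dependent product `Π_X`. -/
@[simps]
def timesOver {C : Type u} [Category.{v} C] [CartesianMonoidalCategory C] (X : C) :
    C ⥤ Over X where
  obj Z := Over.mk (snd Z X)
  map {Z W} f := Over.homMk (f ▷ X) (by simp)

/-- Precomposition with `pullback.snd f (fst B X)` can be cancelled against
precomposition with `f ▷ X`. -/
theorem aux_cancel {C : Type u} [Category.{v} C] [CartesianMonoidalCategory C] [HasPullbacks C]
    {A B X Y : C} (f : A ⟶ B) (φ ψ : (B ⊗ X : C) ⟶ Y)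
    (h : pullback.snd f (fst B X) ≫ φ = pullback.snd f (fst B X) ≫ ψ) :
    (f ▷ X) ≫ φ = (f ▷ X) ≫ ψ := by
  have hl : pullback.lift (fst A X) (f ▷ X) (by simp) ≫ pullback.snd f (fst B X) = f ▷ X :=
    pullback.lift_snd _ _ _
  rw [← hl, Category.assoc, Category.assoc, h]

/-- Dependent function extensionality: for `p : E ⟶ X`, the diagonal of the object
of sections `Π_X p` is canonically isomorphic, over `(Π_X p) × (Π_X p)`, to the
dependent product along the projection of the pullback of the relative diagonal
`Δp` along the double counit `(ε₁, ε₂) : (Π_X p) × (Π_X p) × X ⟶ E ×_X E`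
(given here as the map `m` with its two defining component equations). -/
theorem stmt11 {C : Type u} [Category.{v} C] [CartesianMonoidalCategory C] [HasPullbacks C]
    {X : C} (p : Over X)
    (PX : Over X ⥤ C) (adjX : timesOver X ⊣ PX)
    (m : (PX.obj p ⊗ PX.obj p) ⊗ X ⟶ pullback p.hom p.hom)
    (hm1 : m ≫ pullback.fst p.hom p.hom =
      (fst (PX.obj p) (PX.obj p)) ▷ X ≫ (adjX.counit.app p).left)
    (hm2 : m ≫ pullback.snd p.hom p.hom =
      (snd (PX.obj p) (PX.obj p)) ▷ X ≫ (adjX.counit.app p).left)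
    (Ppr : Over ((PX.obj p ⊗ PX.obj p) ⊗ X) ⥤ Over (PX.obj p ⊗ PX.obj p))
    (adjpr : Over.pullback (fst (PX.obj p ⊗ PX.obj p) X) ⊣ Ppr) :
    Nonempty (Over.mk (lift (𝟙 (PX.obj p)) (𝟙 (PX.obj p))) ≅
      Ppr.obj (Over.mk (pullback.snd (pullback.diagonal p.hom) m))) := by
  have adjinj : ∀ {Z : C} (h₁ h₂ : Z ⟶ PX.obj p),
      h₁ ▷ X ≫ (adjX.counit.app p).left = h₂ ▷ X ≫ (adjX.counit.app p).left → h₁ = h₂ := by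
    intro Z h₁ h₂ hh
    have e : ∀ h : Z ⟶ PX.obj p, ((adjX.homEquiv Z p).symm h).left =
        h ▷ X ≫ (adjX.counit.app p).left := by
      intro h
      rw [Adjunction.homEquiv_counit]
      rfl
    apply (adjX.homEquiv Z p).symm.injective
    ext
    rw [e, e, hh]
  -- key: any A admitting a map to the RHS satisfies the diagonal condition
  have key : ∀ (A : Over (PX.obj p ⊗ PX.obj p))
      (_ : A ⟶ Ppr.obj (Over.mk (pullback.snd (pullback.diagonal p.hom) m))),
      A.hom ≫ fst (PX.obj p) (PX.obj p) = A.hom ≫ snd (PX.obj p) (PX.obj p) := by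
    intro A a
    have hw := Over.w ((adjpr.homEquiv A _).symm a)
    simp only [Over.pullback_obj_hom, Over.mk_hom] at hw
    have hcomp : pullback.snd A.hom (fst (PX.obj p ⊗ PX.obj p) X) ≫
          m ≫ pullback.fst p.hom p.hom =
        pullback.snd A.hom (fst (PX.obj p ⊗ PX.obj p) X) ≫
          m ≫ pullback.snd p.hom p.hom := by
      rw [← hw]
      simp only [Category.assoc, ← pullback.condition_assoc]
      simp
    rw [hm1, hm2] at hcomp
    have hstar := aux_cancel A.hom _ _ hcomp
    apply adjinj
    simp only [comp_whiskerRight, Category.assoc]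
    exact (Category.assoc _ _ _).trans (hstar.trans (Category.assoc _ _ _).symm)
  -- maps into the diagonal are unique
  have monoL : ∀ {A : Over (PX.obj p ⊗ PX.obj p)}
      (a b : A ⟶ Over.mk (lift (𝟙 (PX.obj p)) (𝟙 (PX.obj p)))), a = b := by
    intro A a b
    ext
    have ha := Over.w a
    have hb := Over.w b
    simp only [Over.mk_hom] at ha hb
    have h2 : a.left ≫ lift (𝟙 (PX.obj p)) (𝟙 (PX.obj p)) =
        b.left ≫ lift (𝟙 (PX.obj p)) (𝟙 (PX.obj p)) := ha.trans hb.symm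
    have h3 := congrArg (· ≫ fst (PX.obj p) (PX.obj p)) h2
    simpa using h3
  -- maps into the RHS are unique
  have monoR : ∀ {A : Over (PX.obj p ⊗ PX.obj p)}
      (a b : A ⟶ Ppr.obj (Over.mk (pullback.snd (pullback.diagonal p.hom) m))), a = b := by
    intro A a b
    apply (adjpr.homEquiv A _).symm.injective
    have hmono : Mono (pullback.snd (pullback.diagonal p.hom) m) := inferInstance
    ext
    have ha := Over.w ((adjpr.homEquiv A _).symm a)
    have hb := Over.w ((adjpr.homEquiv A _).symm b)
    simp only [Over.pullback_obj_hom, Over.mk_hom] at ha hb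
    exact hmono.right_cancellation _ _ (ha.trans hb.symm)
  -- forward map
  have hsnd2 : pullback.snd (lift (𝟙 (PX.obj p)) (𝟙 (PX.obj p)))
        (fst (PX.obj p ⊗ PX.obj p) X) ≫ (fst (PX.obj p) (PX.obj p) ▷ X) =
      pullback.snd (lift (𝟙 (PX.obj p)) (𝟙 (PX.obj p)))
        (fst (PX.obj p ⊗ PX.obj p) X) ≫ (snd (PX.obj p) (PX.obj p) ▷ X) := by
    apply CartesianMonoidalCategory.hom_ext
    · simp [← pullback.condition_assoc]
    · simp
  have hu : (pullback.snd (lift (𝟙 (PX.obj p)) (𝟙 (PX.obj p))) (fst (PX.obj p ⊗ PX.obj p) X) ≫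
        (fst (PX.obj p) (PX.obj p) ▷ X) ≫ (adjX.counit.app p).left) ≫
      pullback.diagonal p.hom =
      pullback.snd (lift (𝟙 (PX.obj p)) (𝟙 (PX.obj p))) (fst (PX.obj p ⊗ PX.obj p) X) ≫ m := by
    apply pullback.hom_ext
    · simp [hm1]
    · simp only [Category.assoc, hm2, pullback.diagonal_snd, Category.comp_id]
      exact (reassoc_of% hsnd2) (adjX.counit.app p).left
  let u : (Over.pullback (fst (PX.obj p ⊗ PX.obj p) X)).obj
      (Over.mk (lift (𝟙 (PX.obj p)) (𝟙 (PX.obj p)))) ⟶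
      Over.mk (pullback.snd (pullback.diagonal p.hom) m) :=
    Over.homMk (pullback.lift _ _ hu) (by simp; exact pullback.lift_snd _ _ _)
  let f := (adjpr.homEquiv _ _) u
  -- backward map
  have cond := key _ (𝟙 (Ppr.obj (Over.mk (pullback.snd (pullback.diagonal p.hom) m))))
  let g : Ppr.obj (Over.mk (pullback.snd (pullback.diagonal p.hom) m)) ⟶
      Over.mk (lift (𝟙 (PX.obj p)) (𝟙 (PX.obj p))) :=
    Over.homMk ((Ppr.obj (Over.mk (pullback.snd (pullback.diagonal p.hom) m))).hom ≫
      fst (PX.obj p) (PX.obj p)) (by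
      apply CartesianMonoidalCategory.hom_ext
      · simp
      · simp [cond])
  exact ⟨⟨f, g, monoL _ _, monoR _ _⟩⟩
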